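/- Let Λ be an l×l generator matrix (off-diagonal entries nonnegative, row sums zero) and ℓ ∈ ℝ^l with all entries nonnegative. Define γ(t) = exp(t(Λ − D(ℓ)))·𝟏. Then for all t ≥ 0 and all i, γ_i(t) ≥ e^{(Λ_{ii} − ℓ_i) t} > 0; in particular γ_i(t) > 0. -/

import Mathlib

open Matrix NormedSpace
open scoped Nat

section Helpers

variable {l : ℕ}

attribute [local instance] Matrix.linftyOpNormedRing Matrix.linftyOpNormedAlgebra

lemma pow_entry_nonneg (N : Matrix (Fin l) (Fin l) ℝ) (hN : ∀ i j, 0 ≤ N i j) :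
    ∀ n i j, 0 ≤ (N ^ n) i j := by
  intro n
  induction n with
  | zero => intro i j; by_cases h : i = j <;> simp [pow_zero, Matrix.one_apply, h]
  | succ n ih =>
    intro i j
    rw [pow_succ, Matrix.mul_apply]
    exact Finset.sum_nonneg fun k _ => mul_nonneg (ih i k) (hN k j)

lemma pow_diag_le (N : Matrix (Fin l) (Fin l) ℝ) (hN : ∀ i j, 0 ≤ N i j) (i : Fin l) :
    ∀ n, (N i i) ^ n ≤ (N ^ n) i i := by
  intro n
  induction n with
  | zero => simp [pow_zero, Matrix.one_apply]
  | succ n ih =>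
    rw [pow_succ, pow_succ, Matrix.mul_apply]
    calc N i i ^ n * N i i ≤ (N ^ n) i i * N i i :=
          mul_le_mul_of_nonneg_right ih (hN i i)
      _ ≤ ∑ k, (N ^ n) i k * N k i :=
          Finset.single_le_sum (f := fun k => (N ^ n) i k * N k i)
            (fun k _ => mul_nonneg (pow_entry_nonneg N hN n i k) (hN k i))
            (Finset.mem_univ i)

lemma entry_hasSum (N : Matrix (Fin l) (Fin l) ℝ) (i j : Fin l) :
    HasSum (fun n : ℕ => ((n ! : ℝ))⁻¹ * (N ^ n) i j) ((exp N) i j) := by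
  have hsum : HasSum (fun n : ℕ => ((n ! : ℝ))⁻¹ • N ^ n) (exp N) := by
    rw [exp_eq_tsum ℝ]
    exact (expSeries_summable' (𝕂 := ℝ) N).hasSum
  have hcont : Continuous fun X : Matrix (Fin l) (Fin l) ℝ => X i j :=
    (continuous_apply j).comp (continuous_apply i)
  have := hsum.map (AddMonoidHom.mk' (fun X : Matrix (Fin l) (Fin l) ℝ => X i j)
    (fun _ _ => rfl)) hcont
  exact this

lemma exp_entry_nonneg (N : Matrix (Fin l) (Fin l) ℝ) (hN : ∀ i j, 0 ≤ N i j) (i j : Fin l) :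
    0 ≤ (exp N) i j :=
  hasSum_le (fun n => mul_nonneg (by positivity) (pow_entry_nonneg N hN n i j))
    hasSum_zero (entry_hasSum N i j)

lemma exp_diag_ge (N : Matrix (Fin l) (Fin l) ℝ) (hN : ∀ i j, 0 ≤ N i j) (i : Fin l) :
    Real.exp (N i i) ≤ (exp N) i i := by
  have h1 : HasSum (fun n : ℕ => ((n ! : ℝ))⁻¹ * (N i i) ^ n) (Real.exp (N i i)) := by
    rw [Real.exp_eq_exp_ℝ, exp_eq_tsum ℝ]
    simpa [smul_eq_mul] using (expSeries_summable' (𝕂 := ℝ) (N i i)).hasSum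
  exact hasSum_le (fun n => mul_le_mul_of_nonneg_left (pow_diag_le N hN i n) (by positivity))
    h1 (entry_hasSum N i i)

end Helpers

section Helpers2
variable {l : ℕ}
attribute [local instance] Matrix.linftyOpNormedRing Matrix.linftyOpNormedAlgebra

lemma exp_smul_one (c : ℝ) :
    NormedSpace.exp (c • (1 : Matrix (Fin l) (Fin l) ℝ))
      = Real.exp c • (1 : Matrix (Fin l) (Fin l) ℝ) := by
  rw [← Algebra.algebraMap_eq_smul_one, ← Algebra.algebraMap_eq_smul_one]
  have := NormedSpace.algebraMap_exp_comm (𝔸 := Matrix (Fin l) (Fin l) ℝ) c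
  rw [← Real.exp_eq_exp_ℝ] at this
  exact this.symm

end Helpers2

open Matrix

/-- For a generator matrix `Λ` and nonnegative `ℓ`,
`γ(t) = exp(t(Λ − D(ℓ)))·𝟏` satisfies `γ_i(t) ≥ e^{(Λ_{ii} − ℓ_i)t} > 0`;
in particular `γ_i(t) > 0`. -/
theorem stmt2 (l : ℕ) (hl : 1 ≤ l) (Λ : Matrix (Fin l) (Fin l) ℝ)
    (hoff : ∀ i j, i ≠ j → 0 ≤ Λ i j) (hrow : ∀ i, ∑ j, Λ i j = 0)
    (ℓ : Fin l → ℝ) (hℓ : ∀ i, 0 ≤ ℓ i)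
    (γ : ℝ → Fin l → ℝ)
    (hγ : ∀ t, γ t = (NormedSpace.exp (t • (Λ - Matrix.diagonal ℓ))).mulVec 1) :
    ∀ t, 0 ≤ t → ∀ i,
      Real.exp ((Λ i i - ℓ i) * t) ≤ γ t i ∧ 0 < Real.exp ((Λ i i - ℓ i) * t) ∧
        0 < γ t i := by
  intro t ht i
  have hne : (Finset.univ : Finset (Fin l)).Nonempty := ⟨i, Finset.mem_univ i⟩
  set A : Matrix (Fin l) (Fin l) ℝ := Λ - Matrix.diagonal ℓ with hA
  set μ : ℝ := Finset.univ.sup' hne (fun j => ℓ j - Λ j j) with hμdef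
  have hμ : ∀ j, ℓ j - Λ j j ≤ μ := fun j => Finset.le_sup' (fun k => ℓ k - Λ k k) (Finset.mem_univ j)
  set M : Matrix (Fin l) (Fin l) ℝ := A + μ • (1 : Matrix (Fin l) (Fin l) ℝ) with hM
  have hMentry : ∀ j k, 0 ≤ M j k := by
    intro j k
    by_cases h : j = k
    · subst h
      have : M j j = Λ j j - ℓ j + μ := by
        simp [hM, hA, Matrix.one_apply, Matrix.diagonal_apply_eq]
      rw [this]; linarith [hμ j]
    · have : M j k = Λ j k := by
        simp [hM, hA, Matrix.one_apply_ne h, Matrix.diagonal_apply_ne _ h]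
      rw [this]; exact hoff j k h
  set N : Matrix (Fin l) (Fin l) ℝ := t • M with hN
  have hNentry : ∀ j k, 0 ≤ N j k := fun j k => mul_nonneg ht (hMentry j k)
  have hdecomp : t • A = N + (-(t * μ)) • (1 : Matrix (Fin l) (Fin l) ℝ) := by
    rw [hN, hM, smul_add, smul_smul, neg_smul]
    abel
  have hcomm : Commute N ((-(t * μ)) • (1 : Matrix (Fin l) (Fin l) ℝ)) :=
    (Commute.one_right N).smul_right _
  have hexp1 : NormedSpace.exp ((-(t * μ)) • (1 : Matrix (Fin l) (Fin l) ℝ))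
      = Real.exp (-(t * μ)) • (1 : Matrix (Fin l) (Fin l) ℝ) :=
    exp_smul_one _
  have hsplit : NormedSpace.exp (t • A)
      = Real.exp (-(t * μ)) • NormedSpace.exp N := by
    rw [hdecomp, Matrix.exp_add_of_commute N _ hcomm, hexp1, mul_smul_comm, mul_one]
  have hγi : γ t i = Real.exp (-(t * μ)) * ∑ j, (NormedSpace.exp N) i j := by
    rw [hγ, hsplit]
    simp [Matrix.mulVec, dotProduct, Finset.mul_sum]
  have hdiag : Real.exp (t * (Λ i i - ℓ i + μ)) ≤ (NormedSpace.exp N) i i := by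
    have hNii : N i i = t * (Λ i i - ℓ i + μ) := by
      simp [hN, hM, hA, Matrix.one_apply, Matrix.diagonal_apply_eq]
      ring
    rw [← hNii]
    exact exp_diag_ge N hNentry i
  have hsum : (NormedSpace.exp N) i i ≤ ∑ j, (NormedSpace.exp N) i j :=
    Finset.single_le_sum (fun j _ => exp_entry_nonneg N hNentry i j) (Finset.mem_univ i)
  have key : Real.exp ((Λ i i - ℓ i) * t) ≤ γ t i := by
    rw [hγi]
    calc Real.exp ((Λ i i - ℓ i) * t)
        = Real.exp (-(t * μ)) * Real.exp (t * (Λ i i - ℓ i + μ)) := by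
          rw [← Real.exp_add]; ring_nf
      _ ≤ Real.exp (-(t * μ)) * ∑ j, (NormedSpace.exp N) i j := by
          exact mul_le_mul_of_nonneg_left (le_trans hdiag hsum) (Real.exp_pos _).le
  exact ⟨key, Real.exp_pos _, lt_of_lt_of_le (Real.exp_pos _) key⟩
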